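/- arXiv:1403.2543 — 2 statements merged into one kernel-verified Lean document; each statement's English description precedes it below -/
import Mathlib

section
/- Converse bound for pure-state entanglement dilution: let |ψ⟩ be a unit vector in ℂ^d ⊗ ℂ^d with reduced state ρ_A := Tr_B |ψ⟩⟨ψ|, let M be a natural number with 1 ≤ M ≤ d, and let |Φ⁺_M⟩ := (1/√M) ∑_{k=1}^M e_k ⊗ e_k. Let (U_j)_{j∈J} be a finite family of d×d unitaries and (K_j)_{j∈J} a family of d×d matrices with ∑_{j∈J} K_jᴴ K_j = I (a Lo–Popescu form of an LOCC map Λ with Λ(X) = ∑_j (U_j ⊗ K_j) X (U_jᴴ ⊗ K_jᴴ)). Then for every γ ∈ ℝ, the fidelity of the dilution protocol satisfies ∑_{j∈J} |⟨ψ| (U_j ⊗ K_j) |Φ⁺_M⟩|² ≤ Tr(ρ_A − 2^{−γ} I)₊ + 2^{−γ} M. -/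
open Matrix
open scoped ComplexOrder

noncomputable section

/-- Positive part `C₊` of a Hermitian matrix, obtained by applying `x ↦ max x 0` to the
eigenvalues in a spectral decomposition (junk value `0` for non-Hermitian input). -/
def matPos {n : Type*} [Fintype n] [DecidableEq n] (A : Matrix n n ℂ) : Matrix n n ℂ :=
  if hA : A.IsHermitian then
    (hA.eigenvectorUnitary : Matrix n n ℂ) *
      Matrix.diagonal (fun i => ((max (hA.eigenvalues i) 0 : ℝ) : ℂ)) *
      star (hA.eigenvectorUnitary : Matrix n n ℂ)
  else 0

/-- `Tr C₊` as a real number. -/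
def trPos {n : Type*} [Fintype n] [DecidableEq n] (A : Matrix n n ℂ) : ℝ :=
  (matPos A).trace.re

/-- Spectral projection of a Hermitian matrix onto `[0, ∞)` (junk value `0` for
non-Hermitian input). -/
def projNonneg {n : Type*} [Fintype n] [DecidableEq n] (A : Matrix n n ℂ) : Matrix n n ℂ :=
  if hA : A.IsHermitian then
    (hA.eigenvectorUnitary : Matrix n n ℂ) *
      Matrix.diagonal (fun i => if 0 ≤ hA.eigenvalues i then (1 : ℂ) else 0) *
      star (hA.eigenvectorUnitary : Matrix n n ℂ)
  else 0

open Kronecker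

/-- Partial trace over the second (`B`) tensor factor. -/
def trB {dA dB : ℕ} (M : Matrix (Fin dA × Fin dB) (Fin dA × Fin dB) ℂ) :
    Matrix (Fin dA) (Fin dA) ℂ :=
  Matrix.of fun i j => ∑ k, M (i, k) (j, k)

/-- The maximally entangled unit vector `(1/√M) ∑_{k<M} e_k ⊗ e_k` on `ℂ^d ⊗ ℂ^d`. -/
def mesVec (d M : ℕ) : Fin d × Fin d → ℂ :=
  fun x => if (x.1 : ℕ) = (x.2 : ℕ) ∧ (x.1 : ℕ) < M then ((1 / Real.sqrt M : ℝ) : ℂ) else 0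

namespace EDConverseAux

lemma psd_diag_re_nonneg {n : Type*} [Fintype n] [DecidableEq n]
    {A : Matrix n n ℂ} (hA : A.PosSemidef) (k : n) : 0 ≤ (A k k).re := by
  have h := hA.dotProduct_mulVec_nonneg (Pi.single k 1)
  have hEq : star (Pi.single k 1 : n → ℂ) ⬝ᵥ A.mulVec (Pi.single k 1) = A k k := by
    simp [dotProduct, Matrix.mulVec, Pi.single_apply, Pi.star_apply,
      Finset.sum_ite_eq, mul_ite, ite_mul]
  rw [hEq] at h
  simpa using (Complex.le_def.mp h).1

lemma conj_diag_posSemidef {n : Type*} [Fintype n] [DecidableEq n]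
    (V : Matrix n n ℂ) {g : n → ℝ} (hg : ∀ i, 0 ≤ g i) :
    (V * Matrix.diagonal (fun i => (g i : ℂ)) * star V).PosSemidef := by
  have hD : (Matrix.diagonal (fun i => (g i : ℂ))).PosSemidef :=
    Matrix.posSemidef_diagonal_iff.mpr fun i => Complex.zero_le_real.mpr (hg i)
  simpa [Matrix.star_eq_conjTranspose] using hD.mul_mul_conjTranspose_same V

lemma matPos_posSemidef {n : Type*} [Fintype n] [DecidableEq n]
    {C : Matrix n n ℂ} (hC : C.IsHermitian) : (matPos C).PosSemidef := by
  rw [matPos, dif_pos hC]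
  exact conj_diag_posSemidef _ (fun i => le_max_right _ _)

lemma matPos_sub_posSemidef {n : Type*} [Fintype n] [DecidableEq n]
    {C : Matrix n n ℂ} (hC : C.IsHermitian) : (matPos C - C).PosSemidef := by
  rw [matPos, dif_pos hC]
  have key : ∀ (V : Matrix n n ℂ) (ev : n → ℝ),
      C = V * Matrix.diagonal (RCLike.ofReal ∘ ev) * star V →
      (V * Matrix.diagonal (fun i => ((max (ev i) 0 : ℝ) : ℂ)) * star V - C).PosSemidef := by
    intro V ev h
    have heq : V * Matrix.diagonal (fun i => ((max (ev i) 0 : ℝ) : ℂ)) * star V - C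
        = V * Matrix.diagonal (fun i => ((max (ev i) 0 - ev i : ℝ) : ℂ)) * star V := by
      rw [h, ← Matrix.sub_mul, ← Matrix.mul_sub, Matrix.diagonal_sub]
      congr 2
      funext i
      simp [Function.comp]
    rw [heq]
    exact conj_diag_posSemidef _ (fun i => sub_nonneg.mpr (le_max_left _ _))
  exact key _ _ hC.spectral_theorem

lemma diagsum_bound {n : Type*} [Fintype n] [DecidableEq n]
    {C : Matrix n n ℂ} (hC : C.IsHermitian) {Q : Matrix n n ℂ}
    (hQ : Q ∈ Matrix.unitaryGroup n ℂ) (s : Finset n) :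
    ∑ k ∈ s, ((Qᴴ * C * Q) k k).re ≤ trPos C := by
  have h2 : (Qᴴ * (matPos C - C) * Q).PosSemidef := by
    simpa [Matrix.star_eq_conjTranspose] using
      (matPos_sub_posSemidef hC).mul_mul_conjTranspose_same Qᴴ
  have h4 : (Qᴴ * matPos C * Q).PosSemidef := by
    simpa [Matrix.star_eq_conjTranspose] using
      (matPos_posSemidef hC).mul_mul_conjTranspose_same Qᴴ
  have hQQ : Q * Qᴴ = 1 := by
    simpa [Matrix.star_eq_conjTranspose] using Matrix.mem_unitaryGroup_iff.mp hQ
  have step1 : ∀ k, ((Qᴴ * C * Q) k k).re ≤ ((Qᴴ * matPos C * Q) k k).re := by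
    intro k
    have h := psd_diag_re_nonneg h2 k
    have hexp : (Qᴴ * (matPos C - C) * Q) k k
        = (Qᴴ * matPos C * Q) k k - (Qᴴ * C * Q) k k := by
      simp [Matrix.mul_sub, Matrix.sub_mul, Matrix.sub_apply]
    rw [hexp] at h
    simp only [Complex.sub_re] at h
    linarith
  calc ∑ k ∈ s, ((Qᴴ * C * Q) k k).re
      ≤ ∑ k ∈ s, ((Qᴴ * matPos C * Q) k k).re := Finset.sum_le_sum fun k _ => step1 k
    _ ≤ ∑ k, ((Qᴴ * matPos C * Q) k k).re :=
        Finset.sum_le_sum_of_subset_of_nonneg (Finset.subset_univ s)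
          (fun k _ _ => psd_diag_re_nonneg h4 k)
    _ = (Qᴴ * matPos C * Q).trace.re := by rw [Matrix.trace, Complex.re_sum]; rfl
    _ = trPos C := by rw [Matrix.trace_mul_cycle, hQQ, one_mul]; rfl

lemma conj_mul_self (z : ℂ) : (starRingEnd ℂ) z * z = ((‖z‖ ^ 2 : ℝ) : ℂ) := by
  rw [mul_comm, Complex.mul_conj, Complex.sq_norm]

lemma card_filter_lt {d : ℕ} (M : ℕ) (h : M ≤ d) :
    (Finset.univ.filter (fun k : Fin d => (k : ℕ) < M)).card = M := by
  rw [Finset.card_filter, Fin.sum_univ_eq_sum_range (fun n => if n < M then 1 else 0)]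
  have hr : (Finset.range d).filter (fun n => n < M) = Finset.range M := by
    ext n; simp; omega
  rw [← Finset.sum_filter, hr]
  simp

end EDConverseAux

/-- Converse bound for pure-state entanglement dilution: for an LOCC map in Lo–Popescu form
`X ↦ ∑ⱼ (Uⱼ ⊗ Kⱼ) X (Uⱼᴴ ⊗ Kⱼᴴ)` and any `γ`, the fidelity of the dilution protocol satisfies
`∑ⱼ |⟨ψ|(Uⱼ ⊗ Kⱼ)|Φ⁺_M⟩|² ≤ Tr(ρ_A − 2^{−γ} 1)₊ + 2^{−γ} M`. -/
theorem ed_converse_bound {d : ℕ} (ψ : Fin d × Fin d → ℂ)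
    (hψ : ∑ x, ‖ψ x‖ ^ 2 = 1)
    (M : ℕ) (hM1 : 1 ≤ M) (hMd : M ≤ d)
    {J : Type} [Fintype J] (U : J → Matrix (Fin d) (Fin d) ℂ)
    (hU : ∀ j, U j ∈ Matrix.unitaryGroup (Fin d) ℂ)
    (K : J → Matrix (Fin d) (Fin d) ℂ)
    (hK : ∑ j, (K j)ᴴ * K j = (1 : Matrix (Fin d) (Fin d) ℂ)) (γ : ℝ) :
    ∑ j, ‖star ψ ⬝ᵥ ((U j ⊗ₖ K j).mulVec (mesVec d M))‖ ^ 2 ≤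
      trPos (trB (Matrix.vecMulVec ψ (star ψ)) -
          (2 : ℝ) ^ (-γ) • (1 : Matrix (Fin d) (Fin d) ℂ)) +
        (2 : ℝ) ^ (-γ) * M := by
  classical
  open EDConverseAux Finset in
  set ε : ℝ := (2 : ℝ) ^ (-γ) with hεdef
  have hε : 0 < ε := Real.rpow_pos_of_pos (by norm_num) _
  have hMpos : (0 : ℝ) < (M : ℝ) := by exact_mod_cast hM1
  set ρ : Matrix (Fin d) (Fin d) ℂ := trB (Matrix.vecMulVec ψ (star ψ)) with hρdef
  set Ψm : Matrix (Fin d) (Fin d) ℂ := Matrix.of (fun i l => ψ (i, l)) with hΨdef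
  have hρΨ : ρ = Ψm * Ψmᴴ := by
    ext i j
    simp [hρdef, trB, Matrix.vecMulVec_apply, Matrix.mul_apply, Matrix.conjTranspose_apply,
      hΨdef]
  have hρH : ρ.IsHermitian := by
    rw [hρΨ]; exact Matrix.isHermitian_mul_conjTranspose_self _
  set C : Matrix (Fin d) (Fin d) ℂ := ρ - ε • 1 with hCdef
  have hCH : C.IsHermitian := by
    refine hρH.sub ?_
    simp [Matrix.IsHermitian, Matrix.conjTranspose_smul]
  set Tk : Finset (Fin d) := Finset.univ.filter (fun k : Fin d => (k : ℕ) < M) with hTkdef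
  have hTkcard : Tk.card = M := card_filter_lt M hMd
  set c : ℂ := ((1 / Real.sqrt M : ℝ) : ℂ) with hcdef
  have hc2 : ‖c‖ ^ 2 = 1 / (M : ℝ) := by
    rw [hcdef, Complex.norm_real, Real.norm_eq_abs, abs_of_nonneg (by positivity), div_pow, one_pow,
      Real.sq_sqrt (le_of_lt hMpos)]
  set a : J → Fin d → Fin d → ℂ :=
    fun j k l => ∑ i, (starRingEnd ℂ) (ψ (i, l)) * U j i k with hadef
  -- Step I : dot product formula
  have hdot : ∀ j, star ψ ⬝ᵥ ((U j ⊗ₖ K j).mulVec (mesVec d M))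
      = ∑ k ∈ Tk, ∑ l, a j k l * (c * K j l k) := by
    intro j
    have hmv : ∀ x : Fin d × Fin d, ((U j ⊗ₖ K j).mulVec (mesVec d M)) x
        = ∑ k ∈ Tk, U j x.1 k * K j x.2 k * c := by
      intro x
      rw [Matrix.mulVec, dotProduct, Fintype.sum_prod_type]
      rw [hTkdef, Finset.sum_filter]
      refine Finset.sum_congr rfl fun k _ => ?_
      rw [Finset.sum_eq_single k]
      · simp only [Matrix.kroneckerMap_apply, mesVec]
        by_cases hk : (k : ℕ) < M
        · rw [hcdef]; simp only [hk, and_true, if_true, eq_self_iff_true, true_and, if_pos]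
        · rw [if_neg (fun h => hk h.2), if_neg hk, mul_zero]
      · intro m _ hmk
        have hne : ¬((k : ℕ) = (m : ℕ) ∧ (k : ℕ) < M) := fun h => hmk (Fin.ext h.1).symm
        simp only [Matrix.kroneckerMap_apply, mesVec, if_neg hne, mul_zero]
      · intro h; exact absurd (Finset.mem_univ k) h
    calc star ψ ⬝ᵥ ((U j ⊗ₖ K j).mulVec (mesVec d M))
        = ∑ i, ∑ l, star ψ (i, l) * ∑ k ∈ Tk, U j i k * K j l k * c := by
          rw [dotProduct, Fintype.sum_prod_type]
          exact Finset.sum_congr rfl fun i _ => Finset.sum_congr rfl fun l _ => by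
            rw [hmv (i, l)]
      _ = ∑ i, ∑ l, ∑ k ∈ Tk, star ψ (i, l) * (U j i k * K j l k * c) := by
          simp_rw [Finset.mul_sum]
      _ = ∑ l, ∑ k ∈ Tk, ∑ i, star ψ (i, l) * (U j i k * K j l k * c) := by
          rw [Finset.sum_comm]
          exact Finset.sum_congr rfl fun l _ => Finset.sum_comm
      _ = ∑ k ∈ Tk, ∑ l, ∑ i, star ψ (i, l) * (U j i k * K j l k * c) := by
          rw [Finset.sum_comm]
      _ = ∑ k ∈ Tk, ∑ l, a j k l * (c * K j l k) := by
          refine Finset.sum_congr rfl fun k _ => Finset.sum_congr rfl fun l _ => ?_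
          rw [hadef]
          simp only [Finset.sum_mul]
          exact Finset.sum_congr rfl fun i _ => by
            simp only [Pi.star_apply, Complex.star_def]
            ring
  -- Step II : Cauchy–Schwarz
  have habs : ∀ j, ‖star ψ ⬝ᵥ ((U j ⊗ₖ K j).mulVec (mesVec d M))‖ ^ 2
      ≤ (∑ k ∈ Tk, ∑ l, ‖a j k l‖ ^ 2)
        * (∑ k ∈ Tk, ∑ l, ‖c * K j l k‖ ^ 2) := by
    intro j
    rw [hdot j]
    have e1 : (∑ k ∈ Tk, ∑ l, a j k l * (c * K j l k))
        = ∑ x ∈ Tk ×ˢ (Finset.univ : Finset (Fin d)), a j x.1 x.2 * (c * K j x.2 x.1) := by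
      rw [Finset.sum_product]
    have e2 : (∑ k ∈ Tk, ∑ l, ‖a j k l‖ ^ 2)
        = ∑ x ∈ Tk ×ˢ (Finset.univ : Finset (Fin d)), ‖a j x.1 x.2‖ ^ 2 := by
      rw [Finset.sum_product]
    have e3 : (∑ k ∈ Tk, ∑ l, ‖c * K j l k‖ ^ 2)
        = ∑ x ∈ Tk ×ˢ (Finset.univ : Finset (Fin d)), ‖c * K j x.2 x.1‖ ^ 2 := by
      rw [Finset.sum_product]
    rw [e1, e2, e3]
    calc ‖∑ x ∈ Tk ×ˢ Finset.univ, a j x.1 x.2 * (c * K j x.2 x.1)‖ ^ 2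
        ≤ (∑ x ∈ Tk ×ˢ Finset.univ,
            ‖a j x.1 x.2‖ * ‖c * K j x.2 x.1‖) ^ 2 := by
          apply pow_le_pow_left₀ (norm_nonneg _)
          refine le_trans (norm_sum_le _ _) (le_of_eq ?_)
          exact Finset.sum_congr rfl fun x _ => norm_mul _ _
      _ ≤ _ := Finset.sum_mul_sq_le_sq_mul_sq _ _ _
  -- Step III : first factor equals diagonal sums of Qᴴ ρ Q
  have hfactor1 : ∀ j k, ∑ l, ‖a j k l‖ ^ 2 = (((U j)ᴴ * ρ * U j) k k).re := by
    intro j k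
    have hG : (U j)ᴴ * ρ * U j = ((U j)ᴴ * Ψm) * ((U j)ᴴ * Ψm)ᴴ := by
      rw [hρΨ, Matrix.conjTranspose_mul, Matrix.conjTranspose_conjTranspose]
      simp only [Matrix.mul_assoc]
    have hGa : ∀ l, ((U j)ᴴ * Ψm) k l = star (a j k l) := by
      intro l
      rw [Matrix.mul_apply, hadef]
      simp only [star_sum, star_mul', star_star, Matrix.conjTranspose_apply, hΨdef,
        Matrix.of_apply, Complex.star_def]
      exact Finset.sum_congr rfl fun i _ => by rw [Complex.conj_conj]; ring
    have hdiagval : (((U j)ᴴ * ρ * U j) k k) = ∑ l, star (a j k l) * a j k l := by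
      rw [hG, Matrix.mul_apply]
      refine Finset.sum_congr rfl fun l _ => ?_
      rw [Matrix.conjTranspose_apply, hGa l, star_star]
    rw [hdiagval, Complex.re_sum]
    refine (Finset.sum_congr rfl fun l _ => ?_).symm
    have : star (a j k l) * a j k l = ((‖a j k l‖ ^ 2 : ℝ) : ℂ) := by
      rw [Complex.star_def]
      exact EDConverseAux.conj_mul_self _
    rw [this, Complex.ofReal_re]
  -- Step IV : second factor
  set pj : J → ℝ := fun j => (1 / (M : ℝ)) * ∑ k ∈ Tk, ∑ l, ‖K j l k‖ ^ 2
    with hpjdef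
  have hfactor2 : ∀ j, ∑ k ∈ Tk, ∑ l, ‖c * K j l k‖ ^ 2 = pj j := by
    intro j
    rw [hpjdef]
    simp only [norm_mul, mul_pow, hc2, Finset.mul_sum]
  have hpj0 : ∀ j, 0 ≤ pj j := by
    intro j
    apply mul_nonneg (by positivity)
    exact Finset.sum_nonneg fun k _ => Finset.sum_nonneg fun l _ => by positivity
  -- Step V : diagonal sum bound
  have hQ1 : ∀ j, (U j)ᴴ * U j = 1 := fun j => by
    simpa [Matrix.star_eq_conjTranspose] using Matrix.mem_unitaryGroup_iff'.mp (hU j)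
  have hsj : ∀ j, ∑ k ∈ Tk, (((U j)ᴴ * ρ * U j) k k).re ≤ trPos C + ε * M := by
    intro j
    have hρC : ρ = C + ε • 1 := by rw [hCdef]; abel
    have hsplit : (U j)ᴴ * ρ * U j = (U j)ᴴ * C * U j + ε • (1 : Matrix (Fin d) (Fin d) ℂ) := by
      rw [hρC, Matrix.mul_add, Matrix.add_mul, Matrix.mul_smul, Matrix.smul_mul, mul_one,
        hQ1 j]
    calc ∑ k ∈ Tk, (((U j)ᴴ * ρ * U j) k k).re
        = ∑ k ∈ Tk, ((((U j)ᴴ * C * U j) k k).re + ε) := by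
          refine Finset.sum_congr rfl fun k _ => ?_
          rw [hsplit]
          simp [Matrix.add_apply, Matrix.smul_apply, Matrix.one_apply, Complex.add_re]
      _ = (∑ k ∈ Tk, (((U j)ᴴ * C * U j) k k).re) + ε * M := by
          rw [Finset.sum_add_distrib, Finset.sum_const, hTkcard, nsmul_eq_mul]
          ring
      _ ≤ trPos C + ε * M := by
          have := diagsum_bound hCH (hU j) Tk
          linarith
  -- Step VI : sum of pj equals 1
  have hK1 : ∀ k : Fin d, ∑ j, ∑ l, ‖K j l k‖ ^ 2 = 1 := by
    intro k
    have h1 : (∑ j, (K j)ᴴ * K j) k k = 1 := by rw [hK]; simp [Matrix.one_apply]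
    have h2 : ∀ j : J, (((K j)ᴴ * K j) k k) = ((∑ l, ‖K j l k‖ ^ 2 : ℝ) : ℂ) := by
      intro j
      rw [Matrix.mul_apply, Complex.ofReal_sum]
      refine Finset.sum_congr rfl fun l _ => ?_
      rw [Matrix.conjTranspose_apply, Complex.star_def, EDConverseAux.conj_mul_self]
    have h3 : ((∑ j, ∑ l, ‖K j l k‖ ^ 2 : ℝ) : ℂ) = 1 := by
      push_cast
      rw [← h1, Matrix.sum_apply]
      exact (Finset.sum_congr rfl fun j _ => by rw [h2 j]; push_cast; rfl).symm
    exact_mod_cast h3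
  have hpsum : ∑ j, pj j = 1 := by
    rw [hpjdef]
    simp only []
    rw [← Finset.mul_sum]
    have : ∑ j, ∑ k ∈ Tk, ∑ l, ‖K j l k‖ ^ 2 = (M : ℝ) := by
      rw [Finset.sum_comm]
      rw [show ∑ k ∈ Tk, ∑ j, ∑ l, ‖K j l k‖ ^ 2 = ∑ k ∈ Tk, (1 : ℝ) from
        Finset.sum_congr rfl fun k _ => hK1 k]
      rw [Finset.sum_const, hTkcard, nsmul_eq_mul, mul_one]
    rw [this]
    field_simp
  -- Final assembly
  calc ∑ j, ‖star ψ ⬝ᵥ ((U j ⊗ₖ K j).mulVec (mesVec d M))‖ ^ 2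
      ≤ ∑ j, (trPos C + ε * M) * pj j := by
        refine Finset.sum_le_sum fun j _ => ?_
        have h := habs j
        rw [hfactor2 j] at h
        have h1 : (∑ k ∈ Tk, ∑ l, ‖a j k l‖ ^ 2)
            = ∑ k ∈ Tk, (((U j)ᴴ * ρ * U j) k k).re :=
          Finset.sum_congr rfl fun k _ => hfactor1 j k
        rw [h1] at h
        refine le_trans h (mul_le_mul_of_nonneg_right (hsj j) (hpj0 j))
    _ = (trPos C + ε * M) * ∑ j, pj j := by rw [Finset.mul_sum]
    _ = trPos C + ε * M := by rw [hpsum, mul_one]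
end
end

section
/- Recovery of the spectral divergence rates: fix d ≥ 1, and for each n ∈ ℕ let ρ_n be a state and ω_n a positive semidefinite matrix on (ℂ^d)^{⊗n}. Define the quantum spectral inf- and sup-divergence rates D̲(ρ̂‖ω̂) := sup{γ ∈ ℝ : liminf_{n→∞} Tr(ρ_n − 2^{nγ} ω_n)₊ = 1} and D̄(ρ̂‖ω̂) := inf{γ ∈ ℝ : limsup_{n→∞} Tr(ρ_n − 2^{nγ} ω_n)₊ = 0}. Then, with all suprema/infima taken in the extended reals, lim_{ε→0⁺} liminf_{n→∞} (1/n) D̲_s^ε(ρ_n‖ω_n) = D̲(ρ̂‖ω̂) and lim_{ε→0⁺} limsup_{n→∞} (1/n) D̄_s^ε(ρ_n‖ω_n) = D̄(ρ̂‖ω̂). -/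
open Matrix
open scoped ComplexOrder

noncomputable section

/-- The information spectrum relative entropy `D̲_s^ε(ρ‖σ)`, with the supremum taken in the
extended reals. -/
def DlowE {n : Type*} [Fintype n] [DecidableEq n] (ε : ℝ) (ρ σ : Matrix n n ℂ) : EReal :=
  sSup (Real.toEReal '' {γ : ℝ | 1 - ε ≤ trPos (ρ - (2 : ℝ) ^ γ • σ)})

/-- The information spectrum relative entropy `D̄_s^ε(ρ‖σ)`, with the infimum taken in the
extended reals. -/
def DhighE {n : Type*} [Fintype n] [DecidableEq n] (ε : ℝ) (ρ σ : Matrix n n ℂ) : EReal :=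
  sInf (Real.toEReal '' {γ : ℝ | trPos (ρ - (2 : ℝ) ^ γ • σ) ≤ ε})

namespace SDRaux
variable {ι : Type*} [Fintype ι] [DecidableEq ι]

lemma diag_re_nonneg {Q : Matrix ι ι ℂ} (hQ : Q.PosSemidef) (i : ι) : 0 ≤ (Q i i).re := by
  have h := hQ.re_dotProduct_nonneg (Pi.single i 1)
  simpa [Matrix.mulVec_single, dotProduct, Pi.single_apply, Finset.sum_ite_eq',
    apply_ite, star_one, star_zero] using h

lemma trace_unitary_conj (U : Matrix ι ι ℂ) (hU : star U * U = 1) (D : Matrix ι ι ℂ) :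
    (U * D * star U).trace = D.trace := by
  rw [Matrix.trace_mul_cycle, hU, one_mul]

lemma conj_mul_conj (U : Matrix ι ι ℂ) (hU : star U * U = 1) (f g : ι → ℂ) :
    (U * Matrix.diagonal f * star U) * (U * Matrix.diagonal g * star U)
      = U * Matrix.diagonal (fun i => f i * g i) * star U := by
  have h1 : star U * (U * (Matrix.diagonal g * star U)) = Matrix.diagonal g * star U := by
    rw [← mul_assoc, hU, one_mul]
  simp only [mul_assoc, h1]
  rw [← mul_assoc (Matrix.diagonal f), Matrix.diagonal_mul_diagonal]

end SDRaux

namespace SDRaux2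
variable {ι : Type*} [Fintype ι] [DecidableEq ι]
open SDRaux

variable {A P σ : Matrix ι ι ℂ}

lemma star_mul_selfU (hA : A.IsHermitian) :
    star (hA.eigenvectorUnitary : Matrix ι ι ℂ) * (hA.eigenvectorUnitary : Matrix ι ι ℂ) = 1 :=
  Matrix.UnitaryGroup.star_mul_self _

lemma trPos_eq_sum (hA : A.IsHermitian) : trPos A = ∑ i, max (hA.eigenvalues i) 0 := by
  rw [trPos, matPos, dif_pos hA, trace_unitary_conj _ (star_mul_selfU hA),
    Matrix.trace_diagonal]
  rw [Complex.re_sum]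
  simp

lemma sum_eigenvalues_eq_trace_re (hA : A.IsHermitian) :
    ∑ i, hA.eigenvalues i = A.trace.re := by
  conv_rhs => rw [hA.spectral_theorem, Unitary.conjStarAlgAut_apply]
  rw [trace_unitary_conj _ (star_mul_selfU hA), Matrix.trace_diagonal, Complex.re_sum]
  simp

lemma matPos_eq_proj_mul (hA : A.IsHermitian) : matPos A = projNonneg A * A := by
  rw [matPos, projNonneg, dif_pos hA, dif_pos hA]
  set U : Matrix ι ι ℂ := (hA.eigenvectorUnitary : Matrix ι ι ℂ) with hUdef
  have key : (U * Matrix.diagonal (fun i => if 0 ≤ hA.eigenvalues i then (1:ℂ) else 0) * star U)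
      * (U * Matrix.diagonal (RCLike.ofReal ∘ hA.eigenvalues) * star U)
      = U * Matrix.diagonal (fun i => ((max (hA.eigenvalues i) 0 : ℝ) : ℂ)) * star U := by
    rw [conj_mul_conj _ (star_mul_selfU hA)]
    have hfun : (fun i => (if 0 ≤ hA.eigenvalues i then (1:ℂ) else 0)
        * (RCLike.ofReal ∘ hA.eigenvalues) i)
        = (fun i => ((max (hA.eigenvalues i) 0 : ℝ) : ℂ)) := by
      funext i
      by_cases h : 0 ≤ hA.eigenvalues i
      · simp [h, max_eq_left h, Function.comp]
      · push_neg at h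
        simp [not_le.mpr h, max_eq_right h.le, Function.comp]
    rw [hfun]
  rw [← key]
  conv_rhs => enter [2]; rw [hA.spectral_theorem, Unitary.conjStarAlgAut_apply]

lemma projNonneg_posSemidef (hA : A.IsHermitian) : (projNonneg A).PosSemidef := by
  rw [projNonneg, dif_pos hA]
  have hd : (Matrix.diagonal (fun i => if 0 ≤ hA.eigenvalues i then (1:ℂ) else 0)).PosSemidef := by
    refine Matrix.posSemidef_diagonal_iff.mpr fun i => ?_
    by_cases h : 0 ≤ hA.eigenvalues i <;> simp [h] <;> norm_num
  simpa [Matrix.star_eq_conjTranspose] using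
    hd.mul_mul_conjTranspose_same (hA.eigenvectorUnitary : Matrix ι ι ℂ)

lemma one_sub_projNonneg_posSemidef (hA : A.IsHermitian) : (1 - projNonneg A).PosSemidef := by
  rw [projNonneg, dif_pos hA]
  set U : Matrix ι ι ℂ := (hA.eigenvectorUnitary : Matrix ι ι ℂ)
  have hU : U * star U = 1 := hA.eigenvectorUnitary.2.2
  have h1 : (1 : Matrix ι ι ℂ) = U * Matrix.diagonal (fun _ => (1:ℂ)) * star U := by
    rw [Matrix.diagonal_one, mul_one, hU]
  have hsub : (1 : Matrix ι ι ℂ)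
      - U * Matrix.diagonal (fun i => if 0 ≤ hA.eigenvalues i then (1:ℂ) else 0) * star U
      = U * Matrix.diagonal (fun i => 1 - (if 0 ≤ hA.eigenvalues i then (1:ℂ) else 0)) * star U := by
    rw [h1, ← Matrix.sub_mul, ← Matrix.mul_sub, Matrix.diagonal_sub]
  rw [hsub]
  have hd : (Matrix.diagonal
      (fun i => 1 - (if 0 ≤ hA.eigenvalues i then (1:ℂ) else 0))).PosSemidef := by
    refine Matrix.posSemidef_diagonal_iff.mpr fun i => ?_
    by_cases h : 0 ≤ hA.eigenvalues i <;> simp [h] <;> norm_num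
  simpa [Matrix.star_eq_conjTranspose] using hd.mul_mul_conjTranspose_same U

lemma re_trace_mul_le_trPos (hA : A.IsHermitian) (hP : P.PosSemidef)
    (hP1 : ((1 : Matrix ι ι ℂ) - P).PosSemidef) : (P * A).trace.re ≤ trPos A := by
  obtain ⟨U, hU, hU', hspec⟩ : ∃ U : Matrix ι ι ℂ, star U * U = 1 ∧ U * star U = 1 ∧
      A = U * Matrix.diagonal (RCLike.ofReal ∘ hA.eigenvalues) * star U :=
    ⟨(hA.eigenvectorUnitary : Matrix ι ι ℂ), star_mul_selfU hA,
      hA.eigenvectorUnitary.2.2, hA.spectral_theorem⟩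
  have hQ : (star U * P * U).PosSemidef := by
    simpa [Matrix.star_eq_conjTranspose] using hP.conjTranspose_mul_mul_same U
  have hQ1 : ((1 : Matrix ι ι ℂ) - star U * P * U).PosSemidef := by
    have h2 : (1 : Matrix ι ι ℂ) - star U * P * U
        = star U * ((1 : Matrix ι ι ℂ) - P) * U := by
      rw [Matrix.mul_sub, Matrix.sub_mul, mul_one, hU]
    rw [h2]
    simpa [Matrix.star_eq_conjTranspose] using hP1.conjTranspose_mul_mul_same U
  have htr : (P * A).trace
      = ((star U * P * U) * Matrix.diagonal (RCLike.ofReal ∘ hA.eigenvalues)).trace := by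
    conv_lhs => rw [hspec]
    rw [show P * (U * Matrix.diagonal (RCLike.ofReal ∘ hA.eigenvalues) * star U)
        = (P * (U * Matrix.diagonal (RCLike.ofReal ∘ hA.eigenvalues))) * star U by
        simp [mul_assoc],
      Matrix.trace_mul_comm,
      show star U * (P * (U * Matrix.diagonal (RCLike.ofReal ∘ hA.eigenvalues)))
        = (star U * P * U) * Matrix.diagonal (RCLike.ofReal ∘ hA.eigenvalues) by
        simp [mul_assoc]]
  rw [htr]
  have hdiag : ((star U * P * U) * Matrix.diagonal (RCLike.ofReal ∘ hA.eigenvalues)).trace.re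
      = ∑ i, ((star U * P * U) i i).re * hA.eigenvalues i := by
    rw [Matrix.trace, Complex.re_sum]
    refine Finset.sum_congr rfl fun i _ => ?_
    rw [Matrix.diag, Matrix.mul_diagonal]
    simp [Complex.mul_re, Function.comp]
  rw [hdiag, trPos_eq_sum hA]
  refine Finset.sum_le_sum fun i _ => ?_
  have h0 : 0 ≤ ((star U * P * U) i i).re := diag_re_nonneg hQ i
  have h1 : ((star U * P * U) i i).re ≤ 1 := by
    have := diag_re_nonneg hQ1 i
    simp only [Matrix.sub_apply, Matrix.one_apply_eq, Complex.sub_re, Complex.one_re] at this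
    linarith
  rcases le_or_gt 0 (hA.eigenvalues i) with h | h
  · calc ((star U * P * U) i i).re * hA.eigenvalues i ≤ 1 * hA.eigenvalues i :=
          mul_le_mul_of_nonneg_right h1 h
    _ = hA.eigenvalues i := one_mul _
    _ ≤ max (hA.eigenvalues i) 0 := le_max_left _ _
  · calc ((star U * P * U) i i).re * hA.eigenvalues i ≤ 0 :=
          mul_nonpos_of_nonneg_of_nonpos h0 h.le
    _ ≤ max (hA.eigenvalues i) 0 := le_max_right _ _

open scoped MatrixOrder in
lemma re_trace_mul_nonneg (hP : P.PosSemidef) (hσ : σ.PosSemidef) : 0 ≤ (P * σ).trace.re := by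
  set s : Matrix ι ι ℂ := CFC.sqrt σ with hs
  have hsh : s.conjTranspose = s := (CFC.sqrt_nonneg σ).posSemidef.isHermitian
  have hR : (s * P * s).PosSemidef := by
    have := hP.mul_mul_conjTranspose_same s.conjTranspose
    simpa [hsh] using this
  have htr : (P * σ).trace = (s * P * s).trace := by
    conv_lhs => rw [← CFC.sqrt_mul_sqrt_self σ hσ.nonneg]
    rw [show P * (s * s) = (P * s) * s by rw [mul_assoc], Matrix.trace_mul_comm,
      ← mul_assoc]
  rw [htr, Matrix.trace, Complex.re_sum]
  exact Finset.sum_nonneg fun i _ => diag_re_nonneg hR i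

lemma trPos_nonneg (A : Matrix ι ι ℂ) : 0 ≤ trPos A := by
  by_cases hA : A.IsHermitian
  · rw [trPos_eq_sum hA]
    exact Finset.sum_nonneg fun i _ => le_max_right _ _
  · simp [trPos, matPos, dif_neg hA]

lemma trPos_eq_re_trace_proj (hA : A.IsHermitian) :
    trPos A = (projNonneg A * A).trace.re := by
  rw [trPos, matPos_eq_proj_mul hA]

lemma isHermitian_sub_smul (hρ : (A : Matrix ι ι ℂ).IsHermitian) (hσ : σ.IsHermitian) (c : ℝ) :
    (A - c • σ).IsHermitian := by
  refine Matrix.IsHermitian.sub hρ ?_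
  unfold Matrix.IsHermitian
  rw [Matrix.conjTranspose_smul, star_trivial, hσ.eq]

lemma trPos_sub_smul_mono (hρ : (A : Matrix ι ι ℂ).IsHermitian) (hσ : σ.PosSemidef)
    {a b : ℝ} (h : a ≤ b) : trPos (A - b • σ) ≤ trPos (A - a • σ) := by
  have hA' : (A - b • σ).IsHermitian := isHermitian_sub_smul hρ hσ.isHermitian b
  have hA : (A - a • σ).IsHermitian := isHermitian_sub_smul hρ hσ.isHermitian a
  set P := projNonneg (A - b • σ) with hPdef
  have hP : P.PosSemidef := projNonneg_posSemidef hA'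
  have hP1 : ((1 : Matrix ι ι ℂ) - P).PosSemidef := one_sub_projNonneg_posSemidef hA'
  have hsplit : A - b • σ = (A - a • σ) - (b - a) • σ := by
    rw [sub_smul]; abel
  have hPσ : 0 ≤ (P * σ).trace.re := re_trace_mul_nonneg hP hσ
  calc trPos (A - b • σ) = (P * (A - b • σ)).trace.re := trPos_eq_re_trace_proj hA'
    _ = (P * (A - a • σ)).trace.re - (b - a) * (P * σ).trace.re := by
        rw [hsplit, Matrix.mul_sub, Matrix.mul_smul, Matrix.trace_sub, Matrix.trace_smul]
        simp [Complex.sub_re, Complex.smul_re]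
    _ ≤ (P * (A - a • σ)).trace.re := by nlinarith
    _ ≤ trPos (A - a • σ) := re_trace_mul_le_trPos hA hP hP1

lemma trPos_sub_smul_le_one (hρ : (A : Matrix ι ι ℂ).PosSemidef) (hρ1 : A.trace = 1)
    (hσ : σ.PosSemidef) {c : ℝ} (hc : 0 ≤ c) : trPos (A - c • σ) ≤ 1 := by
  have hA' : (A - c • σ).IsHermitian := isHermitian_sub_smul hρ.isHermitian hσ.isHermitian c
  set P := projNonneg (A - c • σ) with hPdef
  have hP : P.PosSemidef := projNonneg_posSemidef hA'
  have hP1 : ((1 : Matrix ι ι ℂ) - P).PosSemidef := one_sub_projNonneg_posSemidef hA'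
  have hPσ : 0 ≤ (P * σ).trace.re := re_trace_mul_nonneg hP hσ
  have hbound : (P * A).trace.re ≤ trPos A :=
    re_trace_mul_le_trPos hρ.isHermitian hP hP1
  have htrA : trPos A = 1 := by
    rw [trPos_eq_sum hρ.isHermitian]
    have : ∀ i, max (hρ.isHermitian.eigenvalues i) 0 = hρ.isHermitian.eigenvalues i :=
      fun i => max_eq_left (hρ.eigenvalues_nonneg i)
    rw [Finset.sum_congr rfl fun i _ => this i, sum_eigenvalues_eq_trace_re hρ.isHermitian,
      hρ1]
    simp
  calc trPos (A - c • σ) = (P * (A - c • σ)).trace.re := trPos_eq_re_trace_proj hA'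
    _ = (P * A).trace.re - c * (P * σ).trace.re := by
        rw [Matrix.mul_sub, Matrix.mul_smul, Matrix.trace_sub, Matrix.trace_smul]
        simp [Complex.sub_re, Complex.smul_re]
    _ ≤ (P * A).trace.re := by nlinarith
    _ ≤ 1 := htrA ▸ hbound

end SDRaux2

namespace SDRer

lemma er_le_inv_mul {c a : ℝ} (hc : 0 < c) (x : EReal) :
    (a : EReal) ≤ ((c⁻¹ : ℝ) : EReal) * x ↔ ((c * a : ℝ) : EReal) ≤ x := by
  induction x using EReal.rec with
  | bot => simp [EReal.coe_mul_bot_of_pos (inv_pos.2 hc), ← EReal.coe_mul, EReal.coe_ne_bot]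
  | coe r =>
      rw [← EReal.coe_mul, EReal.coe_le_coe_iff, EReal.coe_le_coe_iff,
        inv_mul_eq_div, le_div_iff₀ hc, mul_comm]
  | top => simp [EReal.coe_mul_top_of_pos (inv_pos.2 hc), ← EReal.coe_mul, EReal.coe_ne_top]

lemma er_lt_inv_mul {c a : ℝ} (hc : 0 < c) (x : EReal) :
    (a : EReal) < ((c⁻¹ : ℝ) : EReal) * x ↔ ((c * a : ℝ) : EReal) < x := by
  induction x using EReal.rec with
  | bot => simp [EReal.coe_mul_bot_of_pos (inv_pos.2 hc), ← EReal.coe_mul, EReal.coe_ne_bot]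
  | coe r =>
      rw [← EReal.coe_mul, EReal.coe_lt_coe_iff, EReal.coe_lt_coe_iff,
        inv_mul_eq_div, lt_div_iff₀ hc, mul_comm]
  | top => simp [EReal.coe_mul_top_of_pos (inv_pos.2 hc), ← EReal.coe_mul, EReal.coe_lt_top]

lemma er_inv_mul_le {c a : ℝ} (hc : 0 < c) (x : EReal) :
    ((c⁻¹ : ℝ) : EReal) * x ≤ (a : EReal) ↔ x ≤ ((c * a : ℝ) : EReal) := by
  induction x using EReal.rec with
  | bot => simp [EReal.coe_mul_bot_of_pos (inv_pos.2 hc), ← EReal.coe_mul, EReal.coe_ne_bot]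
  | coe r =>
      rw [← EReal.coe_mul, EReal.coe_le_coe_iff, EReal.coe_le_coe_iff,
        inv_mul_eq_div, div_le_iff₀ hc, mul_comm]
  | top => simp [EReal.coe_mul_top_of_pos (inv_pos.2 hc), ← EReal.coe_mul, EReal.coe_ne_top]

lemma er_inv_mul_lt {c a : ℝ} (hc : 0 < c) (x : EReal) :
    ((c⁻¹ : ℝ) : EReal) * x < (a : EReal) ↔ x < ((c * a : ℝ) : EReal) := by
  induction x using EReal.rec with
  | bot => simp [EReal.coe_mul_bot_of_pos (inv_pos.2 hc), ← EReal.coe_mul, EReal.bot_lt_coe]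
  | coe r =>
      rw [← EReal.coe_mul, EReal.coe_lt_coe_iff, EReal.coe_lt_coe_iff,
        inv_mul_eq_div, div_lt_iff₀ hc, mul_comm]
  | top => simp [EReal.coe_mul_top_of_pos (inv_pos.2 hc), ← EReal.coe_mul, EReal.coe_ne_top]

end SDRer


namespace SDRkey
open Filter SDRer

lemma key_liminf (t : ℕ → ℝ → ℝ) (ht0 : ∀ n c, 0 ≤ t n c) (ht1 : ∀ n c, t n c ≤ 1)
    (htmono : ∀ (n : ℕ) (a b : ℝ), a ≤ b → t n b ≤ t n a) :
    Filter.Tendsto (fun ε : ℝ => Filter.liminf (fun n : ℕ =>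
        (((n : ℝ)⁻¹ : ℝ) : EReal) * sSup (Real.toEReal '' {γ : ℝ | 1 - ε ≤ t n γ}))
        Filter.atTop)
      (nhdsWithin 0 (Set.Ioi 0))
      (nhds (sSup (Real.toEReal ''
        {γ : ℝ | Filter.liminf (fun n : ℕ => t n ((n : ℝ) * γ)) Filter.atTop = 1}))) := by
  set S := {γ : ℝ | Filter.liminf (fun n : ℕ => t n ((n : ℝ) * γ)) Filter.atTop = 1} with hS
  set L := sSup (Real.toEReal '' S) with hL
  set g : ℝ → EReal := fun ε => Filter.liminf (fun n : ℕ =>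
      (((n : ℝ)⁻¹ : ℝ) : EReal) * sSup (Real.toEReal '' {γ : ℝ | 1 - ε ≤ t n γ}))
      Filter.atTop with hg
  have hA : ∀ ε : ℝ, 0 < ε → L ≤ g ε := by
    intro ε hε
    refine sSup_le ?_
    rintro x ⟨γ, hγ, rfl⟩
    have hγ' : Filter.liminf (fun n : ℕ => t n ((n : ℝ) * γ)) Filter.atTop = 1 := hγ
    have hbdd : Filter.IsBoundedUnder (· ≥ ·) Filter.atTop (fun n : ℕ => t n ((n : ℝ) * γ)) :=
      Filter.isBoundedUnder_of ⟨0, fun n => ht0 n _⟩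
    have hev : ∀ᶠ n in Filter.atTop, 1 - ε < t n ((n : ℝ) * γ) := by
      refine Filter.eventually_lt_of_lt_liminf ?_ hbdd
      rw [hγ']; linarith
    refine Filter.le_liminf_of_le (by isBoundedDefault) ?_
    filter_upwards [hev, Filter.eventually_ge_atTop 1] with n h1 h2
    have hn : (0 : ℝ) < (n : ℝ) := by exact_mod_cast h2
    rw [er_le_inv_mul hn]
    exact le_sSup ⟨(n : ℝ) * γ, h1.le, rfl⟩
  have hB : ∀ γ : ℝ, (∀ ε : ℝ, 0 < ε → (γ : EReal) < g ε) → γ ∈ S := by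
    intro γ hγ
    have hub : Filter.liminf (fun n : ℕ => t n ((n : ℝ) * γ)) Filter.atTop ≤ 1 :=
      Filter.liminf_le_of_frequently_le
        ((Filter.Eventually.of_forall fun n => ht1 n _).frequently)
        (Filter.isBoundedUnder_of ⟨0, fun n => ht0 n _⟩)
    have hlb : ∀ ε : ℝ, 0 < ε →
        1 - ε ≤ Filter.liminf (fun n : ℕ => t n ((n : ℝ) * γ)) Filter.atTop := by
      intro ε hε
      have hev := Filter.eventually_lt_of_lt_liminf (hγ ε hε)
      refine Filter.le_liminf_of_le (Filter.IsBoundedUnder.isCoboundedUnder_ge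
        (Filter.isBoundedUnder_of ⟨1, fun n => ht1 n _⟩)) ?_
      filter_upwards [hev, Filter.eventually_ge_atTop 1] with n h1 h2
      have hn : (0 : ℝ) < (n : ℝ) := by exact_mod_cast h2
      rw [er_lt_inv_mul hn] at h1
      obtain ⟨b, hb, hlt⟩ := lt_sSup_iff.mp h1
      obtain ⟨c, hc, rfl⟩ := hb
      have hcle : (n : ℝ) * γ ≤ c := le_of_lt (by exact_mod_cast hlt)
      exact le_trans hc (htmono n _ _ hcle)
    have h1le : (1 : ℝ) ≤ Filter.liminf (fun n : ℕ => t n ((n : ℝ) * γ)) Filter.atTop := by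
      by_contra h'
      push_neg at h'
      have := hlb ((1 - Filter.liminf (fun n : ℕ => t n ((n : ℝ) * γ)) Filter.atTop) / 2)
        (by linarith)
      linarith
    exact le_antisymm hub h1le
  refine tendsto_order.2 ⟨?_, ?_⟩
  · intro b hb
    exact eventually_nhdsWithin_of_forall fun ε hε => lt_of_lt_of_le hb (hA ε hε)
  · intro b hb
    obtain ⟨ε₀, hε₀, hgb⟩ : ∃ ε₀ : ℝ, 0 < ε₀ ∧ g ε₀ < b := by
      by_contra hcon
      push_neg at hcon
      obtain ⟨γ, hγ1, hγ2⟩ := EReal.exists_between_coe_real hb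
      have hγS : γ ∈ S := hB γ fun ε hε => lt_of_lt_of_le hγ2 (hcon ε hε)
      exact absurd (le_sSup (Set.mem_image_of_mem _ hγS)) (not_le.mpr hγ1)
    filter_upwards [Ioo_mem_nhdsGT_of_mem ⟨le_refl (0:ℝ), hε₀⟩] with ε hε
    refine lt_of_le_of_lt ?_ hgb
    refine Filter.liminf_le_liminf (Filter.Eventually.of_forall fun n => ?_)
    refine mul_le_mul_of_nonneg_left ?_ (by
      exact_mod_cast EReal.coe_nonneg.mpr (inv_nonneg.mpr (Nat.cast_nonneg n)))
    refine sSup_le_sSup (Set.image_mono fun c hc => ?_)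
    simp only [Set.mem_setOf_eq] at hc ⊢
    have : ε ≤ ε₀ := le_of_lt hε.2
    linarith

lemma key_limsup (t : ℕ → ℝ → ℝ) (ht0 : ∀ n c, 0 ≤ t n c) (ht1 : ∀ n c, t n c ≤ 1)
    (htmono : ∀ (n : ℕ) (a b : ℝ), a ≤ b → t n b ≤ t n a) :
    Filter.Tendsto (fun ε : ℝ => Filter.limsup (fun n : ℕ =>
        (((n : ℝ)⁻¹ : ℝ) : EReal) * sInf (Real.toEReal '' {γ : ℝ | t n γ ≤ ε}))
        Filter.atTop)
      (nhdsWithin 0 (Set.Ioi 0))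
      (nhds (sInf (Real.toEReal ''
        {γ : ℝ | Filter.limsup (fun n : ℕ => t n ((n : ℝ) * γ)) Filter.atTop = 0}))) := by
  set T := {γ : ℝ | Filter.limsup (fun n : ℕ => t n ((n : ℝ) * γ)) Filter.atTop = 0} with hT
  set M := sInf (Real.toEReal '' T) with hM
  set h : ℝ → EReal := fun ε => Filter.limsup (fun n : ℕ =>
      (((n : ℝ)⁻¹ : ℝ) : EReal) * sInf (Real.toEReal '' {γ : ℝ | t n γ ≤ ε}))
      Filter.atTop with hh
  have hA : ∀ ε : ℝ, 0 < ε → h ε ≤ M := by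
    intro ε hε
    refine le_sInf ?_
    rintro x ⟨γ, hγ, rfl⟩
    have hγ' : Filter.limsup (fun n : ℕ => t n ((n : ℝ) * γ)) Filter.atTop = 0 := hγ
    have hev : ∀ᶠ n in Filter.atTop, t n ((n : ℝ) * γ) < ε := by
      refine Filter.eventually_lt_of_limsup_lt ?_
        (Filter.isBoundedUnder_of ⟨1, fun n => ht1 n _⟩)
      rw [hγ']; exact hε
    refine Filter.limsup_le_of_le (by isBoundedDefault) ?_
    filter_upwards [hev, Filter.eventually_ge_atTop 1] with n h1 h2
    have hn : (0 : ℝ) < (n : ℝ) := by exact_mod_cast h2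
    rw [er_inv_mul_le hn]
    exact sInf_le ⟨(n : ℝ) * γ, h1.le, rfl⟩
  have hB : ∀ γ : ℝ, (∀ ε : ℝ, 0 < ε → h ε < (γ : EReal)) → γ ∈ T := by
    intro γ hγ
    have hlb : 0 ≤ Filter.limsup (fun n : ℕ => t n ((n : ℝ) * γ)) Filter.atTop :=
      Filter.le_limsup_of_frequently_le
        ((Filter.Eventually.of_forall fun n => ht0 n _).frequently)
        (Filter.isBoundedUnder_of ⟨1, fun n => ht1 n _⟩)
    have hub : ∀ ε : ℝ, 0 < ε →
        Filter.limsup (fun n : ℕ => t n ((n : ℝ) * γ)) Filter.atTop ≤ ε := by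
      intro ε hε
      have hev := Filter.eventually_lt_of_limsup_lt (hγ ε hε)
      refine Filter.limsup_le_of_le (Filter.IsBoundedUnder.isCoboundedUnder_le
        (Filter.isBoundedUnder_of ⟨0, fun n => ht0 n _⟩)) ?_
      filter_upwards [hev, Filter.eventually_ge_atTop 1] with n h1 h2
      have hn : (0 : ℝ) < (n : ℝ) := by exact_mod_cast h2
      rw [er_inv_mul_lt hn] at h1
      obtain ⟨b, hb, hlt⟩ := sInf_lt_iff.mp h1
      obtain ⟨c, hc, rfl⟩ := hb
      have hcle : c ≤ (n : ℝ) * γ := le_of_lt (by exact_mod_cast hlt)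
      exact le_trans (htmono n _ _ hcle) hc
    have h0le : Filter.limsup (fun n : ℕ => t n ((n : ℝ) * γ)) Filter.atTop ≤ 0 := by
      by_contra h'
      push_neg at h'
      have := hub (Filter.limsup (fun n : ℕ => t n ((n : ℝ) * γ)) Filter.atTop / 2)
        (by linarith)
      linarith
    exact le_antisymm h0le hlb
  refine tendsto_order.2 ⟨?_, ?_⟩
  · intro b hb
    obtain ⟨ε₀, hε₀, hgb⟩ : ∃ ε₀ : ℝ, 0 < ε₀ ∧ b < h ε₀ := by
      by_contra hcon
      push_neg at hcon
      obtain ⟨γ, hγ1, hγ2⟩ := EReal.exists_between_coe_real hb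
      have hγT : γ ∈ T := hB γ fun ε hε => lt_of_le_of_lt (hcon ε hε) hγ1
      exact absurd (sInf_le (Set.mem_image_of_mem _ hγT)) (not_le.mpr hγ2)
    filter_upwards [Ioo_mem_nhdsGT_of_mem ⟨le_refl (0:ℝ), hε₀⟩] with ε hε
    refine lt_of_lt_of_le hgb ?_
    refine Filter.limsup_le_limsup (Filter.Eventually.of_forall fun n => ?_)
    refine mul_le_mul_of_nonneg_left ?_ (by
      exact_mod_cast EReal.coe_nonneg.mpr (inv_nonneg.mpr (Nat.cast_nonneg n)))
    refine sInf_le_sInf (Set.image_mono fun c hc => ?_)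
    simp only [Set.mem_setOf_eq] at hc ⊢
    have : ε ≤ ε₀ := le_of_lt hε.2
    linarith
  · intro b hb
    exact eventually_nhdsWithin_of_forall fun ε hε => lt_of_le_of_lt (hA ε hε) hb

end SDRkey

/-- Recovery of the quantum spectral inf- and sup-divergence rates from the information
spectrum relative entropies: for arbitrary sequences of states `ρ_n` and positive semidefinite
operators `ω_n` on `(ℂ^d)^{⊗n}`,
`lim_{ε→0⁺} liminf_n (1/n) D̲_s^ε(ρ_n‖ω_n) = D̲(ρ̂‖ω̂)` and
`lim_{ε→0⁺} limsup_n (1/n) D̄_s^ε(ρ_n‖ω_n) = D̄(ρ̂‖ω̂)`, in the extended reals. -/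
theorem spectral_divergence_recovery {d : ℕ} (hd : 1 ≤ d)
    (ρ : (n : ℕ) → Matrix (Fin n → Fin d) (Fin n → Fin d) ℂ)
    (ω : (n : ℕ) → Matrix (Fin n → Fin d) (Fin n → Fin d) ℂ)
    (hρ : ∀ n, (ρ n).PosSemidef ∧ (ρ n).trace = 1)
    (hω : ∀ n, (ω n).PosSemidef) :
    Filter.Tendsto
        (fun ε : ℝ => Filter.liminf
          (fun n : ℕ => (((n : ℝ)⁻¹ : ℝ) : EReal) * DlowE ε (ρ n) (ω n)) Filter.atTop)
        (nhdsWithin 0 (Set.Ioi 0))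
        (nhds (sSup (Real.toEReal ''
          {γ : ℝ | Filter.liminf
              (fun n : ℕ => trPos (ρ n - (2 : ℝ) ^ ((n : ℝ) * γ) • ω n)) Filter.atTop = 1}))) ∧
      Filter.Tendsto
        (fun ε : ℝ => Filter.limsup
          (fun n : ℕ => (((n : ℝ)⁻¹ : ℝ) : EReal) * DhighE ε (ρ n) (ω n)) Filter.atTop)
        (nhdsWithin 0 (Set.Ioi 0))
        (nhds (sInf (Real.toEReal ''
          {γ : ℝ | Filter.limsup
              (fun n : ℕ => trPos (ρ n - (2 : ℝ) ^ ((n : ℝ) * γ) • ω n)) Filter.atTop = 0}))) := by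
  have ht0 : ∀ (n : ℕ) (c : ℝ), 0 ≤ trPos (ρ n - (2 : ℝ) ^ c • ω n) :=
    fun n c => SDRaux2.trPos_nonneg _
  have ht1 : ∀ (n : ℕ) (c : ℝ), trPos (ρ n - (2 : ℝ) ^ c • ω n) ≤ 1 := fun n c =>
    SDRaux2.trPos_sub_smul_le_one (hρ n).1 (hρ n).2 (hω n) (Real.rpow_nonneg (by norm_num) c)
  have htmono : ∀ (n : ℕ) (a b : ℝ), a ≤ b →
      trPos (ρ n - (2 : ℝ) ^ b • ω n) ≤ trPos (ρ n - (2 : ℝ) ^ a • ω n) := fun n a b hab =>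
    SDRaux2.trPos_sub_smul_mono (hρ n).1.isHermitian (hω n)
      (Real.rpow_le_rpow_of_exponent_le one_le_two hab)
  constructor
  · have := SDRkey.key_liminf (fun n c => trPos (ρ n - (2 : ℝ) ^ c • ω n)) ht0 ht1 htmono
    simpa only [DlowE] using this
  · have := SDRkey.key_limsup (fun n c => trPos (ρ n - (2 : ℝ) ^ c • ω n)) ht0 ht1 htmono
    simpa only [DhighE] using this
end
end
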